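/- Let A be symmetric positive definite and S_m ∈ ℝ^{d×m} have full column rank with m < d. The matrix Σ_m = A^{-1} - S_m (S_mᵀ A S_m)^{-1} S_mᵀ has rank d − m. -/

import Mathlib

open Matrix
open scoped Matrix

section Aux

variable {d m : ℕ}

/-- `S *ᵥ x` as a linear combination of the columns of `S`. -/
lemma aux_mulVec_eq_sum (S : Matrix (Fin d) (Fin m) ℝ) (x : Fin m → ℝ) :
    S *ᵥ x = ∑ j : Fin m, x j • Sᵀ j := by
  funext i
  simp [Matrix.mulVec, dotProduct, Finset.sum_apply, mul_comm]

lemma aux_mulVec_ne_zero (S : Matrix (Fin d) (Fin m) ℝ)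
    (hS : LinearIndependent ℝ (fun j : Fin m => Sᵀ j))
    {x : Fin m → ℝ} (hx : x ≠ 0) : S *ᵥ x ≠ 0 := by
  intro h
  apply hx
  funext j
  have := (Fintype.linearIndependent_iff.mp hS) x (by rw [← aux_mulVec_eq_sum, h])
  exact this j

lemma aux_B_posdef (A : Matrix (Fin d) (Fin d) ℝ) (hA : A.PosDef)
    (S : Matrix (Fin d) (Fin m) ℝ)
    (hS : LinearIndependent ℝ (fun j : Fin m => Sᵀ j)) :
    (Sᵀ * A * S).PosDef := by
  refine posDef_iff_dotProduct_mulVec.mpr ⟨?_, ?_⟩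
  · have hAe : Aᵀ = A := hA.1
    show (Sᵀ * A * S)ᴴ = Sᵀ * A * S
    simp only [conjTranspose_eq_transpose_of_trivial, transpose_mul, transpose_transpose]
    rw [hAe, Matrix.mul_assoc]
  · intro x hx
    have h1 : star x ⬝ᵥ ((Sᵀ * A * S) *ᵥ x) = star (S *ᵥ x) ⬝ᵥ (A *ᵥ (S *ᵥ x)) := by
      rw [← Matrix.mulVec_mulVec, ← Matrix.mulVec_mulVec]
      simp only [star_trivial]
      rw [Matrix.dotProduct_mulVec x Sᵀ, Matrix.vecMul_transpose]
    rw [h1]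
    exact hA.dotProduct_mulVec_pos (aux_mulVec_ne_zero S hS hx)

end Aux

/-- The inverse-prior BayesCG posterior covariance has rank `d - m`. -/
theorem inverse_prior_posterior_covariance_rank
    (d m : ℕ) (hm : m < d)
    (A : Matrix (Fin d) (Fin d) ℝ) (hA : A.PosDef)
    (S : Matrix (Fin d) (Fin m) ℝ)
    (hS : LinearIndependent ℝ (fun j : Fin m => Sᵀ j)) :
    (A⁻¹ - S * (Sᵀ * A * S)⁻¹ * Sᵀ).rank = d - m := by
  set B := Sᵀ * A * S with hBdef
  have hB : B.PosDef := aux_B_posdef A hA S hS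
  have hBu : IsUnit B.det := hB.det_pos.ne'.isUnit
  have hAu : IsUnit A.det := hA.det_pos.ne'.isUnit
  have hAiu : IsUnit (A⁻¹).det := A.isUnit_nonsing_inv_det hAu
  set P := S * B⁻¹ * Sᵀ * A with hPdef
  -- the covariance factors as (1 - P) * A⁻¹
  have hfac : A⁻¹ - S * B⁻¹ * Sᵀ = (1 - P) * A⁻¹ := by
    rw [sub_mul, one_mul, hPdef]
    congr 1
    rw [Matrix.mul_assoc (S * B⁻¹ * Sᵀ) A A⁻¹, Matrix.mul_nonsing_inv A hAu, Matrix.mul_one]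
  -- P is idempotent
  have hPP : P * P = P := by
    rw [hPdef]
    have : S * B⁻¹ * Sᵀ * A * (S * B⁻¹ * Sᵀ * A)
        = S * (B⁻¹ * (Sᵀ * A * S) * B⁻¹) * Sᵀ * A := by
      simp only [Matrix.mul_assoc]
    rw [this, ← hBdef, Matrix.nonsing_inv_mul B hBu, Matrix.one_mul]
  -- rank S = m
  have hrankS : S.rank = m := by
    rw [Matrix.rank_eq_finrank_span_cols, Matrix.col_def, finrank_span_eq_card hS, Fintype.card_fin]
  -- P * S = S
  have hPS : P * S = S := by
    rw [hPdef]
    have : S * B⁻¹ * Sᵀ * A * S = S * (B⁻¹ * (Sᵀ * A * S)) := by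
      simp only [Matrix.mul_assoc]
    rw [this, ← hBdef, Matrix.nonsing_inv_mul B hBu, Matrix.mul_one]
  -- rank P = m
  have hrankP : P.rank = m := by
    refine le_antisymm ?_ ?_
    · calc P.rank = (S * (B⁻¹ * Sᵀ * A)).rank := by rw [hPdef]; simp only [Matrix.mul_assoc]
        _ ≤ S.rank := Matrix.rank_mul_le_left _ _
        _ = m := hrankS
    · calc m = S.rank := hrankS.symm
        _ = (P * S).rank := by rw [hPS]
        _ ≤ P.rank := Matrix.rank_mul_le_left _ _
  -- rank (1 - P) = d - m
  have key : (1 - P).rank = d - m := by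
    set p := P.mulVecLin with hp
    have hpp : p ∘ₗ p = p := by rw [hp, ← Matrix.mulVecLin_mul, hPP]
    have hrange : LinearMap.range (1 - P).mulVecLin = LinearMap.ker p := by
      ext x
      constructor
      · rintro ⟨y, rfl⟩
        simp only [LinearMap.mem_ker, Matrix.mulVecLin_apply]
        rw [hp]
        simp only [Matrix.mulVecLin_apply]
        rw [Matrix.mulVec_mulVec]
        have : P * (1 - P) = 0 := by rw [Matrix.mul_sub, Matrix.mul_one, hPP, sub_self]
        rw [this, Matrix.zero_mulVec]
      · intro hx
        refine ⟨x, ?_⟩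
        simp only [Matrix.mulVecLin_apply, Matrix.sub_mulVec, Matrix.one_mulVec]
        have hx0 : P *ᵥ x = 0 := hx
        rw [hx0, sub_zero]
    have hrn := LinearMap.finrank_range_add_finrank_ker p
    have hdom : Module.finrank ℝ (Fin d → ℝ) = d := by simp
    have hrp : Module.finrank ℝ (LinearMap.range p) = m := hrankP
    rw [Matrix.rank, hrange]
    omega
  calc (A⁻¹ - S * B⁻¹ * Sᵀ).rank = ((1 - P) * A⁻¹).rank := by rw [hfac]
    _ = (1 - P).rank := Matrix.rank_mul_eq_left_of_isUnit_det _ _ hAiu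
    _ = d - m := key
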